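/- If the rotor configuration ρ' is obtained from the rotor configuration ρ by pushing a cycle of ρ, then ρ' ≡ ρ. -/

import Mathlib

open Function

/-- A strongly connected finite directed multigraph (self-loops and multiple arcs
allowed), given by source and head maps `src, head : E → V`, together with a nonempty
target set `T` and a rotor mechanism at each vertex: `next` is a cyclic ordering of
the arcs emanating from each vertex (it permutes the arcs, preserves the source, and
acts transitively on the arcs emanating from any fixed vertex). -/
structure RotorSystem (V E : Type) [Fintype V] [DecidableEq V] [Fintype E]
    [DecidableEq E] where
  src : E → V
  head : E → V
  T : Finset V
  T_nonempty : T.Nonempty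
  strongly_connected : ∀ v w : V,
    Relation.ReflTransGen (fun a b => ∃ e : E, src e = a ∧ head e = b) v w
  next : E → E
  next_src : ∀ e, src (next e) = src e
  next_bijective : Function.Bijective next
  next_cyclic : ∀ e e', src e = src e' → ∃ k : ℕ, next^[k] e = e'

namespace RotorSystem

variable {V E : Type} [Fintype V] [DecidableEq V] [Fintype E] [DecidableEq E]

/-- The set `V₀ = V - T` of non-target vertices. -/
abbrev V0 (S : RotorSystem V E) : Type := {v : V // v ∉ S.T}

/-- A rotor configuration: each non-target vertex carries an arc emanating from it. -/
abbrev RConf (S : RotorSystem V E) : Type :=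
  {ρ : S.V0 → E // ∀ v : S.V0, S.src (ρ v) = v.1}

/-- A particle configuration: a number of particles at each non-target vertex. -/
abbrev PConf (S : RotorSystem V E) : Type := S.V0 → ℕ

variable (S : RotorSystem V E)

/-- One step of a single particle's rotor walk: at a non-target vertex the rotor is
first progressed and the particle then moves along the new rotor arc; target vertices
absorb the particle. -/
def step (p : V × S.RConf) : V × S.RConf :=
  if h : p.1 ∈ S.T then p
  else
    (S.head (S.next (p.2.1 ⟨p.1, h⟩)),
      ⟨Function.update p.2.1 ⟨p.1, h⟩ (S.next (p.2.1 ⟨p.1, h⟩)), by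
        intro w
        rcases eq_or_ne w ⟨p.1, h⟩ with rfl | hw
        · rw [Function.update_self, S.next_src]
          exact p.2.2 ⟨p.1, h⟩
        · rw [Function.update_of_ne hw]
          exact p.2.2 w⟩)

open Classical in
/-- Route a single particle from `x` by rotor walk until it first reaches the target
set; the result is the pair (final position, final rotor configuration). -/
noncomputable def route (x : V) (ρ : S.RConf) : V × S.RConf :=
  if h : ∃ n, (S.step^[n] (x, ρ)).1 ∈ S.T then S.step^[Nat.find h] (x, ρ) else (x, ρ)

/-- `t_x(ρ)`: the target vertex reached by a single particle started at `x` with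
initial rotor configuration `ρ`. -/
noncomputable def tgt (x : V) (ρ : S.RConf) : V := (S.route x ρ).1

/-- The particle addition operator `E_v`: add one particle at `v` and route it to the
target set. -/
noncomputable def addAt (v : S.V0) (ρ : S.RConf) : S.RConf := (S.route v.1 ρ).2

/-- The action `σρ` of a particle configuration on a rotor configuration: place
`σ v` particles at each vertex `v` and route them all to the target set. -/
noncomputable def act (σ : S.PConf) (ρ : S.RConf) : S.RConf :=
  (Finset.univ : Finset S.V0).toList.foldr (fun v r => (S.addAt v)^[σ v] r) ρ

/-- Equivalence of rotor configurations: `ρ ≡ ρ'` iff `σρ = σρ'` for some particle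
configuration `σ`. -/
def REquiv (ρ ρ' : S.RConf) : Prop := ∃ σ : S.PConf, S.act σ ρ = S.act σ ρ'

/-- The outdegree `d(v)`. -/
def outdeg (v : V) : ℕ := (Finset.univ.filter fun e : E => S.src e = v).card

/-- The number `d(v,w)` of arcs from `v` to `w`. -/
def numArcs (v w : V) : ℕ :=
  (Finset.univ.filter fun e : E => S.src e = v ∧ S.head e = w).card

/-- A particle configuration is stable if every non-target vertex holds at most
`d(v) - 1` particles. -/
def IsStable (σ : S.PConf) : Prop := ∀ v : S.V0, σ v < S.outdeg v.1

/-- Parallel toppling: every unstable vertex topples once, sending one particle along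
each arc emanating from it. -/
def toppleStep (σ : S.PConf) : S.PConf := fun v =>
  (if S.outdeg v.1 ≤ σ v then σ v - S.outdeg v.1 else σ v) +
    ∑ w : S.V0, (if S.outdeg w.1 ≤ σ w then S.numArcs w.1 v.1 else 0)

open Classical in
/-- The stabilization `σ°` of a particle configuration. -/
noncomputable def stabilize (σ : S.PConf) : S.PConf :=
  if h : ∃ n, S.IsStable (S.toppleStep^[n] σ) then S.toppleStep^[Nat.find h] σ else σ

/-- A stable particle configuration is recurrent if it is reachable (by adding
particles and stabilizing) from every particle configuration.  The recurrent
configurations form the sandpile group `S(G/T)` under addition-then-stabilization. -/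
def IsRecurrent (τ : S.PConf) : Prop :=
  S.IsStable τ ∧ ∀ σ : S.PConf, ∃ τ' : S.PConf, τ = S.stabilize (τ' + σ)

/-- `e` is the identity element of the sandpile group `S(G/T)`. -/
def IsSandpileIdentity (e : S.PConf) : Prop :=
  S.IsRecurrent e ∧ ∀ τ : S.PConf, S.IsRecurrent τ → S.stabilize (e + τ) = τ

/-- The rotor arcs of `ρ`, as a relation on vertices. -/
def rotorRel (ρ : S.RConf) (a b : V) : Prop :=
  ∃ h : a ∉ S.T, S.head (ρ.1 ⟨a, h⟩) = b

/-- A rotor configuration is acyclic if its rotor arcs contain no directed cycle. -/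
def IsAcyclicConf (ρ : S.RConf) : Prop :=
  ∀ v : V, ¬ Relation.TransGen (S.rotorRel ρ) v v

/-- `ρ'` is obtained from `ρ` by pushing a cycle: there are distinct non-target
vertices `v_0, …, v_{r-1}` with the rotor arc of `v_j` pointing to `v_{j+1}`
(cyclically); each such rotor is regressed one step, other rotors are unchanged. -/
def IsCyclePush (ρ ρ' : S.RConf) : Prop :=
  ∃ r : ℕ, 0 < r ∧ ∃ f : ZMod r → S.V0, Function.Injective f ∧
    (∀ j : ZMod r, S.head (ρ.1 (f j)) = (f (j + 1)).1) ∧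
    (∀ j : ZMod r, S.next (ρ'.1 (f j)) = ρ.1 (f j)) ∧
    (∀ v : S.V0, v ∉ Set.range f → ρ'.1 v = ρ.1 v)

end RotorSystem

namespace RotorSystem
section Aux

variable {V E : Type} [Fintype V] [DecidableEq V] [Fintype E] [DecidableEq E]
  (S : RotorSystem V E)

/-- A single rotor walk always eventually reaches the target set. -/
theorem aux_reaches_target (x : V) (ρ : S.RConf) :
    ∃ n, (S.step^[n] (x, ρ)).1 ∈ S.T := by
  by_contra hc
  push_neg at hc
  set p : ℕ → V × S.RConf := fun n => S.step^[n] (x, ρ) with hp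
  have hstep : ∀ n, p (n + 1) = S.step (p n) := by
    intro n; simp only [hp, Function.iterate_succ_apply']
  have hnotT : ∀ n, (p n).1 ∉ S.T := hc
  -- basic facts about one step
  have hpos : ∀ n, (p (n + 1)).1
      = S.head (S.next ((p n).2.1 ⟨(p n).1, hnotT n⟩)) := by
    intro n; rw [hstep n, RotorSystem.step, dif_neg (hnotT n)]
  have hconf : ∀ n, (p (n + 1)).2.1
      = Function.update (p n).2.1 ⟨(p n).1, hnotT n⟩
          (S.next ((p n).2.1 ⟨(p n).1, hnotT n⟩)) := by
    intro n; rw [hstep n, RotorSystem.step, dif_neg (hnotT n)]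
  -- frequently visited vertices
  set R : Set V := {v | ∀ N, ∃ n, N ≤ n ∧ (p n).1 = v} with hR
  have hRnotT : ∀ v ∈ R, v ∉ S.T := by
    rintro v hv
    obtain ⟨n, -, rfl⟩ := hv 0
    exact hnotT n
  -- fix a vertex v ∈ R and study the rotor at v
  have hclosed : ∀ v ∈ R, ∀ e : E, S.src e = v → S.head e ∈ R := by
    intro v hv e he
    have hvT : v ∉ S.T := hRnotT v hv
    set g : ℕ → E := fun n => (p n).2.1 ⟨v, hvT⟩ with hg
    have hsrcg : ∀ n, S.src (g n) = v := fun n => (p n).2.2 ⟨v, hvT⟩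
    have hgsame : ∀ n, (p n).1 ≠ v → g (n + 1) = g n := by
      intro n hn
      simp only [hg, hconf n]
      rw [Function.update_of_ne]
      exact fun hh => hn (congrArg Subtype.val hh).symm
    have hgadv : ∀ n, (p n).1 = v → g (n + 1) = S.next (g n) := by
      intro n hn
      simp only [hg, hconf n]
      subst hn
      rw [Function.update_self]
    have hposadv : ∀ n, (p n).1 = v → (p (n + 1)).1 = S.head (S.next (g n)) := by
      intro n hn
      rw [hpos n]
      subst hn; rfl
    -- g is constant on visit-free intervals
    have hconst : ∀ k m, (∀ i, i < k → (p (m + i)).1 ≠ v) → g (m + k) = g m := by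
      intro k
      induction k with
      | zero => intro m _; rfl
      | succ k ih =>
        intro m hm
        have : m + (k + 1) = (m + k) + 1 := by ring
        rw [this, hgsame (m + k) (by simpa using hm k (Nat.lt_succ_self k)),
          ih m fun i hi => hm i (Nat.lt_succ_of_lt hi)]
    -- the rotor at v attains every iterate of next along visits
    have hmain : ∀ k m, (p m).1 = v →
        ∃ n, m ≤ n ∧ (p n).1 = v ∧ g n = S.next^[k] (g m) := by
      intro k
      induction k with
      | zero => intro m hm; exact ⟨m, le_refl m, hm, rfl⟩
      | succ k ih =>
        intro m hm
        obtain ⟨n, hmn, hnv, hgn⟩ := ih m hm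
        have hg1 : g (n + 1) = S.next^[k + 1] (g m) := by
          rw [hgadv n hnv, hgn, Function.iterate_succ_apply']
        -- find the least visit time ≥ n+1
        have hex : ∃ j, n + 1 ≤ j ∧ (p j).1 = v := hv (n + 1)
        classical
        set n' := Nat.find hex with hn'
        obtain ⟨hn'1, hn'2⟩ := Nat.find_spec hex
        have hbetween : ∀ i, i < n' - (n + 1) → (p ((n + 1) + i)).1 ≠ v := by
          intro i hi hiv
          have h1 : (n + 1) + i < n' := by omega
          exact absurd (Nat.find_min' hex ⟨Nat.le_add_right _ _, hiv⟩) (by omega)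
        have : g n' = g (n + 1) := by
          have := hconst (n' - (n + 1)) (n + 1) hbetween
          rwa [Nat.add_sub_cancel' hn'1] at this
        exact ⟨n', by omega, hn'2, by rw [this, hg1]⟩
    -- conclude: head e is visited frequently
    intro N
    obtain ⟨m, hNm, hmv⟩ := hv N
    obtain ⟨e', he'⟩ := S.next_bijective.2 e
    have hsrce' : S.src e' = v := by rw [← S.next_src e', he', he]
    obtain ⟨k, hk⟩ := S.next_cyclic (g m) e' (by rw [hsrcg, hsrce'])
    obtain ⟨n, hmn, hnv, hgn⟩ := hmain k m hmv
    refine ⟨n + 1, by omega, ?_⟩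
    rw [hposadv n hnv, hgn, hk, he']
  -- R is nonempty
  obtain ⟨v₀, hv₀⟩ := Finite.exists_infinite_fiber (fun n => (p n).1)
  have hv₀R : v₀ ∈ R := by
    intro N
    obtain ⟨b, hb, hNb⟩ := (Set.infinite_coe_iff.mp hv₀).exists_gt N
    exact ⟨b, le_of_lt hNb, hb⟩
  -- every vertex reachable from v₀ is in R
  have hreach : ∀ w, Relation.ReflTransGen
      (fun a b => ∃ e : E, S.src e = a ∧ S.head e = b) v₀ w → w ∈ R := by
    intro w hw
    induction hw with
    | refl => exact hv₀R
    | tail _ hbc ih =>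
      obtain ⟨e, he1, he2⟩ := hbc
      rw [← he2]
      exact hclosed _ ih e he1
  obtain ⟨t, ht⟩ := S.T_nonempty
  exact hRnotT t (hreach t (S.strongly_connected v₀ t)) ht

/-- Routing is invariant under running the walk through non-target positions. -/
theorem aux_route_shift (x : V) (ρ₁ ρ₂ : S.RConf) (r : ℕ)
    (hr : S.step^[r] (x, ρ₁) = (x, ρ₂))
    (hmid : ∀ j, j < r → (S.step^[j] (x, ρ₁)).1 ∉ S.T) :
    S.route x ρ₁ = S.route x ρ₂ := by
  classical
  have hshift : ∀ n, S.step^[n + r] (x, ρ₁) = S.step^[n] (x, ρ₂) := by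
    intro n
    rw [Function.iterate_add_apply, hr]
  have h₂ : ∃ n, (S.step^[n] (x, ρ₂)).1 ∈ S.T := S.aux_reaches_target x ρ₂
  have h₁ : ∃ n, (S.step^[n] (x, ρ₁)).1 ∈ S.T := by
    obtain ⟨n, hn⟩ := h₂
    exact ⟨n + r, by rw [hshift n]; exact hn⟩
  rw [RotorSystem.route, RotorSystem.route, dif_pos h₁, dif_pos h₂]
  have hge : r ≤ Nat.find h₁ := by
    by_contra hlt
    exact hmid _ (by omega) (Nat.find_spec h₁)
  have hle1 : Nat.find h₂ ≤ Nat.find h₁ - r := by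
    apply Nat.find_min' h₂
    rw [← hshift, Nat.sub_add_cancel hge]
    exact Nat.find_spec h₁
  have hle2 : Nat.find h₁ ≤ Nat.find h₂ + r := by
    apply Nat.find_min' h₁
    rw [hshift]
    exact Nat.find_spec h₂
  have heq : Nat.find h₁ = Nat.find h₂ + r := by omega
  rw [heq, hshift]

open Classical in
/-- Intermediate configurations along a cycle push. -/
noncomputable def pushChi (ρ ρ' : S.RConf) (r : ℕ) (f : ZMod r → S.V0) (j : ℕ) :
    S.RConf :=
  ⟨fun v => if ∃ i, i < j ∧ f (i : ZMod r) = v then ρ.1 v else ρ'.1 v, by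
    intro v
    dsimp only
    split
    · exact ρ.2 v
    · exact ρ'.2 v⟩

/-- Folding the indicator particle configuration computes `addAt`. -/
theorem aux_foldr_indicator (v₀ : S.V0) (σ : S.PConf) (hσ₀ : σ v₀ = 1)
    (hσ : ∀ v, v ≠ v₀ → σ v = 0) (ρ : S.RConf) :
    ∀ L : List S.V0, v₀ ∈ L → L.Nodup →
      L.foldr (fun v r => (S.addAt v)^[σ v] r) ρ = S.addAt v₀ ρ := by
  have hnil : ∀ L : List S.V0, v₀ ∉ L →
      L.foldr (fun v r => (S.addAt v)^[σ v] r) ρ = ρ := by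
    intro L
    induction L with
    | nil => intro _; rfl
    | cons a L ih =>
      intro hL
      have ha : a ≠ v₀ := fun hh => hL (hh ▸ (show a ∈ a :: L from List.mem_cons_self))
      simp only [List.foldr_cons, hσ a ha, Function.iterate_zero_apply]
      exact ih fun hh => hL (List.mem_cons_of_mem a hh)
  intro L
  induction L with
  | nil => intro hh; exact absurd hh List.not_mem_nil
  | cons a L ih =>
    intro hmem hnd
    rcases List.mem_cons.mp hmem with rfl | hmem'
    · simp only [List.foldr_cons, hσ₀, Function.iterate_one]
      rw [hnil L (List.nodup_cons.mp hnd).1]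
    · have ha : a ≠ v₀ := by
        rintro rfl
        exact (List.nodup_cons.mp hnd).1 hmem'
      simp only [List.foldr_cons, hσ a ha, Function.iterate_zero_apply]
      exact ih hmem' (List.nodup_cons.mp hnd).2

theorem aux_pushChi_zero (ρ ρ' : S.RConf) (r : ℕ) (f : ZMod r → S.V0) :
    S.pushChi ρ ρ' r f 0 = ρ' := by
  apply Subtype.ext
  funext v
  rw [pushChi]
  dsimp only
  rw [if_neg]
  rintro ⟨i, hi, -⟩
  omega

theorem aux_pushChi_last (ρ ρ' : S.RConf) (r : ℕ) (f : ZMod r → S.V0)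
    (hout : ∀ v : S.V0, v ∉ Set.range f → ρ'.1 v = ρ.1 v) (hr : 0 < r) :
    S.pushChi ρ ρ' r f r = ρ := by
  haveI : NeZero r := ⟨hr.ne'⟩
  apply Subtype.ext
  funext v
  rw [pushChi]
  dsimp only
  split
  · rfl
  · rename_i hcond
    apply hout
    rintro ⟨j, rfl⟩
    exact hcond ⟨(j : ZMod r).val, (j : ZMod r).val_lt, by rw [ZMod.natCast_val, ZMod.cast_id]⟩

theorem aux_pushChi_step (ρ ρ' : S.RConf) (r : ℕ) (f : ZMod r → S.V0)
    (hinj : Function.Injective f)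
    (hcyc : ∀ j : ZMod r, S.head (ρ.1 (f j)) = (f (j + 1)).1)
    (hpush : ∀ j : ZMod r, S.next (ρ'.1 (f j)) = ρ.1 (f j))
    (hr : 0 < r) (j : ℕ) (hj : j < r) :
    S.step ((f (j : ZMod r)).1, S.pushChi ρ ρ' r f j)
      = ((f ((j : ZMod r) + 1)).1, S.pushChi ρ ρ' r f (j + 1)) := by
  haveI : NeZero r := ⟨hr.ne'⟩
  have hfT : (f (j : ZMod r)).1 ∉ S.T := (f (j : ZMod r)).2
  have hsub : (⟨(f (j : ZMod r)).1, hfT⟩ : S.V0) = f (j : ZMod r) := rfl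
  have hchival : (S.pushChi ρ ρ' r f j).1 (f (j : ZMod r)) = ρ'.1 (f (j : ZMod r)) := by
    rw [pushChi]
    dsimp only
    rw [if_neg]
    rintro ⟨i, hi, hfi⟩
    have : (i : ZMod r) = (j : ZMod r) := hinj hfi
    have : i = j := by
      have h1 := ZMod.val_cast_of_lt (show i < r by omega)
      have h2 := ZMod.val_cast_of_lt hj
      rw [← h1, ← h2, this]
    omega
  rw [RotorSystem.step, dif_neg hfT]
  simp only [hsub, hchival, hpush]
  congr 1
  · exact hcyc (j : ZMod r)
  · apply Subtype.ext
    funext v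
    dsimp only
    rcases eq_or_ne v (f (j : ZMod r)) with rfl | hv
    · rw [Function.update_self, pushChi]
      dsimp only
      rw [if_pos ⟨j, Nat.lt_succ_self j, rfl⟩]
    · rw [Function.update_of_ne hv, pushChi, pushChi]
      dsimp only
      have hiff : (∃ i, i < j + 1 ∧ f (i : ZMod r) = v) ↔
          (∃ i, i < j ∧ f (i : ZMod r) = v) := by
        constructor
        · rintro ⟨i, hi, rfl⟩
          rcases Nat.lt_succ_iff_lt_or_eq.mp hi with hi' | rfl
          · exact ⟨i, hi', rfl⟩
          · exact absurd rfl hv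
        · rintro ⟨i, hi, rfl⟩
          exact ⟨i, Nat.lt_succ_of_lt hi, rfl⟩
      by_cases hcond : ∃ i, i < j ∧ f (i : ZMod r) = v
      · rw [if_pos hcond, if_pos (hiff.mpr hcond)]
      · rw [if_neg hcond, if_neg (fun hh => hcond (hiff.mp hh))]

theorem aux_pushChi_iterate (ρ ρ' : S.RConf) (r : ℕ) (f : ZMod r → S.V0)
    (hinj : Function.Injective f)
    (hcyc : ∀ j : ZMod r, S.head (ρ.1 (f j)) = (f (j + 1)).1)
    (hpush : ∀ j : ZMod r, S.next (ρ'.1 (f j)) = ρ.1 (f j))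
    (hr : 0 < r) :
    ∀ j, j ≤ r → S.step^[j] ((f 0).1, ρ')
      = ((f (j : ZMod r)).1, S.pushChi ρ ρ' r f j) := by
  intro j
  induction j with
  | zero =>
    intro _
    rw [Function.iterate_zero_apply, Nat.cast_zero, S.aux_pushChi_zero]
  | succ j ih =>
    intro hj
    rw [Function.iterate_succ_apply', ih (by omega),
      aux_pushChi_step S ρ ρ' r f hinj hcyc hpush hr j (by omega)]
    push_cast
    rfl

end Aux
end RotorSystem

/-- **Lemma (cycle pushing preserves the equivalence class).**
If `ρ'` is obtained from `ρ` by pushing a cycle of `ρ`, then `ρ' ≡ ρ`. -/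
theorem cyclePush_requiv {V E : Type} [Fintype V] [DecidableEq V] [Fintype E]
    [DecidableEq E] (S : RotorSystem V E)
    (ρ ρ' : S.RConf) (h : S.IsCyclePush ρ ρ') :
    S.REquiv ρ' ρ := by
  classical
  obtain ⟨r, hr, f, hinj, hcyc, hpush, hout⟩ := h
  haveI : NeZero r := ⟨hr.ne'⟩
  -- the indicator particle configuration at f 0
  set σ : S.PConf := fun v => if v = f 0 then 1 else 0 with hσdef
  have hσ₀ : σ (f 0) = 1 := by simp [hσdef]
  have hσ : ∀ v, v ≠ f 0 → σ v = 0 := by intro v hv; simp [hσdef, hv]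
  refine ⟨σ, ?_⟩
  have hact : ∀ τ : S.RConf, S.act σ τ = S.addAt (f 0) τ := by
    intro τ
    rw [RotorSystem.act]
    exact S.aux_foldr_indicator (f 0) σ hσ₀ hσ τ _
      (Finset.mem_toList.mpr (Finset.mem_univ _)) (Finset.nodup_toList _)
  rw [hact, hact]
  -- the walk started at f 0 with ρ' traverses the cycle and turns ρ' into ρ
  have hiter := S.aux_pushChi_iterate ρ ρ' r f hinj hcyc hpush hr
  have hfull : S.step^[r] ((f 0).1, ρ') = ((f 0).1, ρ) := by
    rw [hiter r le_rfl, ZMod.natCast_self,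
      S.aux_pushChi_last ρ ρ' r f hout hr]
  have hmid : ∀ j, j < r → (S.step^[j] ((f 0).1, ρ')).1 ∉ S.T := by
    intro j hj
    rw [hiter j (le_of_lt hj)]
    exact (f (j : ZMod r)).2
  rw [RotorSystem.addAt, RotorSystem.addAt,
    S.aux_route_shift (f 0).1 ρ' ρ r hfull hmid]
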